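/- For all integers n ≥ k ≥ 3 and r > k+1, the number of collinear r-tuples of points in the grid [n]^k is at most (k·2^{r+k+1}/r!)·n^{r+k−1}. -/

import Mathlib

open Finset

/-- The integer grid `{1,…,n}^k`. -/
noncomputable def Zgrid (n k : ℕ) : Finset (Fin k → ℤ) := Fintype.piFinset fun _ => Finset.Icc (1:ℤ) (n:ℤ)

def castPt {k : ℕ} (z : Fin k → ℤ) : Fin k → ℝ := fun i => (z i : ℝ)

noncomputable def TSet (n k r : ℕ) : Finset (Finset (Fin k → ℤ)) :=
  @Finset.filter _
    (fun T => T.card = r ∧ Collinear ℝ (castPt '' (↑T : Set (Fin k → ℤ))))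
    (Classical.decPred _) (Zgrid n k).powerset

lemma mem_TSet {n k r : ℕ} {T : Finset (Fin k → ℤ)} :
    T ∈ TSet n k r ↔ T ⊆ Zgrid n k ∧ T.card = r ∧
      Collinear ℝ (castPt '' (↑T : Set (Fin k → ℤ))) := by
  classical
  simp only [TSet, Finset.mem_filter, Finset.mem_powerset]

lemma mem_Zgrid {n k : ℕ} {z : Fin k → ℤ} :
    z ∈ Zgrid n k ↔ ∀ i, 1 ≤ z i ∧ z i ≤ (n:ℤ) := by
  simp [Zgrid, Fintype.mem_piFinset]

def PP {k : ℕ} (T : Finset (Fin k → ℤ))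
    (d : (Fin k → ℤ) × (Fin k → ℤ) × ((Fin k → ℤ) → ℤ)) : Prop :=
  d.1 ≠ 0 ∧ d.2.1 ∈ T ∧ (∀ x ∈ T, x = d.2.1 + d.2.2 x • d.1) ∧ ∀ x ∈ T, 0 ≤ d.2.2 x

/-- Bezout-type closure for the integrality property. -/
lemma Q_gcd {ι : Type*} {W : ι → ℝ} {p q : ℤ} (hp : ∀ i, ∃ m : ℤ, (p:ℝ) * W i = m)
    (hq : ∀ i, ∃ m : ℤ, (q:ℝ) * W i = m) :
    ∀ i, ∃ m : ℤ, ((GCDMonoid.gcd p q : ℤ) : ℝ) * W i = m := by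
  intro i
  obtain ⟨mp, hmp⟩ := hp i
  obtain ⟨mq, hmq⟩ := hq i
  refine ⟨p.gcdA q * mp + p.gcdB q * mq, ?_⟩
  have hb : ((p.gcd q : ℤ) : ℝ) = (p:ℝ) * (p.gcdA q : ℝ) + (q:ℝ) * (p.gcdB q : ℝ) := by
    exact_mod_cast congrArg (fun z : ℤ => (z : ℝ)) (Int.gcd_eq_gcd_ab p q)
  rw [← Int.coe_gcd, hb]
  have hr : ((p:ℝ) * (p.gcdA q : ℝ) + (q:ℝ) * (p.gcdB q : ℝ)) * W i
      = (p.gcdA q : ℝ) * ((p:ℝ) * W i) + (p.gcdB q : ℝ) * ((q:ℝ) * W i) := by ring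
  rw [hr, hmp, hmq]
  push_cast
  ring

lemma Q_finset_gcd {k : ℕ} {W : Fin k → ℝ} (s : Finset (Fin k → ℤ)) (f : (Fin k → ℤ) → ℤ)
    (h : ∀ x ∈ s, ∀ i, ∃ m : ℤ, ((f x : ℤ) : ℝ) * W i = m) :
    ∀ i, ∃ m : ℤ, ((s.gcd f : ℤ) : ℝ) * W i = m := by
  classical
  induction s using Finset.induction_on with
  | empty => intro i; exact ⟨0, by simp⟩
  | @insert a s' ha ih =>
      rw [Finset.gcd_insert]
      exact Q_gcd (h a (Finset.mem_insert_self a s'))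
        (ih fun x hxs => h x (Finset.mem_insert_of_mem hxs))

lemma exists_pp {k : ℕ} (T : Finset (Fin k → ℤ)) (hT2 : 2 ≤ T.card)
    (hcol : Collinear ℝ (castPt '' (↑T : Set (Fin k → ℤ)))) : ∃ d, PP T d := by
  classical
  obtain ⟨x₀, hx₀, y₀, hy₀, hxy⟩ := Finset.one_lt_card.mp hT2
  obtain ⟨i₀, hi₀⟩ := Function.ne_iff.mp hxy
  have hne : (T.image (fun x => x i₀)).Nonempty := ⟨x₀ i₀, Finset.mem_image_of_mem _ hx₀⟩
  obtain ⟨β, hβT, hβmin⟩ := Finset.mem_image.mp ((T.image (fun x => x i₀)).min'_mem hne)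
  have hβle : ∀ x ∈ T, β i₀ ≤ x i₀ := by
    intro x hx
    rw [hβmin]
    exact Finset.min'_le _ _ (Finset.mem_image_of_mem _ hx)
  obtain ⟨w, hw⟩ := (collinear_iff_of_mem (Set.mem_image_of_mem castPt hβT)).mp hcol
  have hwmem : ∀ x ∈ T, ∃ c : ℝ, castPt x = c • w + castPt β := by
    intro x hx
    obtain ⟨c, hc⟩ := hw (castPt x) (Set.mem_image_of_mem castPt hx)
    exact ⟨c, by simpa using hc⟩
  choose cc hcc using hwmem
  have hccI : ∀ x (hx : x ∈ T), ∀ i, (x i : ℝ) - (β i : ℝ) = cc x hx * w i := by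
    intro x hx i
    have := congrFun (hcc x hx) i
    simp [castPt] at this
    linarith [this]
  have hwi₀ : w i₀ ≠ 0 := by
    intro h0
    have h1 := hccI x₀ hx₀ i₀
    have h2 := hccI y₀ hy₀ i₀
    rw [h0, mul_zero] at h1 h2
    have : (x₀ i₀ : ℝ) = (y₀ i₀ : ℝ) := by linarith
    exact hi₀ (by exact_mod_cast this)
  set W : Fin k → ℝ := fun i => w i / w i₀ with hW
  set a : (Fin k → ℤ) → ℤ := fun x => x i₀ - β i₀ with ha
  have haW : ∀ x ∈ T, ∀ i, ((a x : ℤ) : ℝ) * W i = (x i : ℝ) - (β i : ℝ) := by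
    intro x hx i
    have h1 := hccI x hx i
    have h2 := hccI x hx i₀
    have hax : ((a x : ℤ) : ℝ) = cc x hx * w i₀ := by
      simp only [ha]; push_cast; linarith
    rw [hax, hW]
    have : cc x hx * w i₀ * (w i / w i₀) = cc x hx * w i := by
      field_simp
    rw [this]
    linarith
  set g : ℤ := T.gcd a with hg
  have hgdvd : ∀ x ∈ T, g ∣ a x := fun x hx => Finset.gcd_dvd hx
  have hgne : g ≠ 0 := by
    intro h0
    have h1 := (Finset.gcd_eq_zero_iff.mp h0) x₀ hx₀
    have h2 := (Finset.gcd_eq_zero_iff.mp h0) y₀ hy₀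
    simp [ha] at h1 h2
    exact hi₀ (by linarith)
  have hgnn : 0 < g := by
    rcases lt_or_eq_of_le (Int.nonneg_of_normalize_eq_self
      (@Finset.normalize_gcd ℤ _ _ _ T a)) with h | h
    · exact h
    · exact absurd h.symm hgne
  -- integrality of g • W
  have hQg : ∀ i, ∃ m : ℤ, ((g : ℤ) : ℝ) * W i = m := by
    refine Q_finset_gcd T a ?_
    intro x hx i
    refine ⟨x i - β i, ?_⟩
    rw [haW x hx i]
    push_cast
    ring
  choose v hv using hQg
  -- the multiplier function
  set s : (Fin k → ℤ) → ℤ := fun x => a x / g with hs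
  have hgs : ∀ x ∈ T, g * s x = a x := fun x hx => Int.mul_ediv_cancel' (hgdvd x hx)
  refine ⟨(v, β, s), ?_, hβT, ?_, ?_⟩
  · -- v ≠ 0
    intro h0
    have hvi₀ : v i₀ = g := by
      have h := hv i₀
      have hWi₀ : W i₀ = 1 := by simp only [hW]; exact div_self hwi₀
      rw [hWi₀, mul_one] at h
      exact_mod_cast h.symm
    have : v i₀ = 0 := congrFun h0 i₀
    rw [hvi₀] at this
    exact hgne this
  · -- x = β + s x • v
    intro x hx
    funext i
    have hr : (x i : ℝ) = (β i : ℝ) + (s x : ℝ) * (v i : ℝ) := by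
      have h1 := haW x hx i
      have h2 := hv i
      have : ((a x : ℤ) : ℝ) = (g : ℝ) * (s x : ℝ) := by
        rw [← hgs x hx]; push_cast; ring
      rw [this] at h1
      have h3 : (s x : ℝ) * ((g:ℝ) * W i) = (x i : ℝ) - (β i : ℝ) := by rw [← h1]; ring
      rw [h2] at h3
      linarith
    have : (x i : ℝ) = ((β i + s x * v i : ℤ) : ℝ) := by push_cast; exact_mod_cast hr
    have := Int.cast_injective this
    simpa using this
  · -- 0 ≤ s x
    intro x hx
    have := hβle x hx
    exact Int.ediv_nonneg (by simp [ha]; linarith [hβle x hx]) hgnn.le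
open Classical in
noncomputable def dat {k : ℕ} (T : Finset (Fin k → ℤ)) :
    (Fin k → ℤ) × (Fin k → ℤ) × ((Fin k → ℤ) → ℤ) :=
  if h : ∃ d, PP T d then h.choose else (0, 0, fun _ => 0)

noncomputable def vT {k : ℕ} (T : Finset (Fin k → ℤ)) : Fin k → ℤ := (dat T).1
noncomputable def betaT {k : ℕ} (T : Finset (Fin k → ℤ)) : Fin k → ℤ := (dat T).2.1
noncomputable def sT {k : ℕ} (T : Finset (Fin k → ℤ)) : (Fin k → ℤ) → ℤ := (dat T).2.2

lemma pp_dat {k : ℕ} {T : Finset (Fin k → ℤ)} (h : ∃ d, PP T d) : PP T (dat T) := by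
  rw [dat, dif_pos h]
  exact h.choose_spec

lemma pp_of_mem_TSet {n k r : ℕ} {T : Finset (Fin k → ℤ)} (hr2 : 2 ≤ r)
    (hT : T ∈ TSet n k r) : PP T (dat T) := by
  obtain ⟨hsub, hcard, hcol⟩ := mem_TSet.mp hT
  exact pp_dat (exists_pp T (hcard ▸ hr2) hcol)

noncomputable def Dset (n k : ℕ) (T : Finset (Fin k → ℤ)) : Finset ℕ :=
  @Finset.filter _ (fun u => ∀ j : ℕ, j ≤ u → betaT T - (j:ℤ) • vT T ∈ Zgrid n k)
    (Classical.decPred _) (Finset.range (n+1))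

lemma mem_Dset {n k : ℕ} {T : Finset (Fin k → ℤ)} {u : ℕ} :
    u ∈ Dset n k T ↔ u < n + 1 ∧ ∀ j : ℕ, j ≤ u → betaT T - (j:ℤ) • vT T ∈ Zgrid n k := by
  classical
  simp only [Dset, Finset.mem_filter, Finset.mem_range]

noncomputable def s0 (n k : ℕ) (T : Finset (Fin k → ℤ)) : ℕ :=
  if h : (Dset n k T).Nonempty then (Dset n k T).max' h else 0

noncomputable def bT (n k : ℕ) (T : Finset (Fin k → ℤ)) : Fin k → ℤ :=
  betaT T - (s0 n k T : ℤ) • vT T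

noncomputable def uT (n k : ℕ) (T : Finset (Fin k → ℤ)) (x : Fin k → ℤ) : ℕ :=
  (sT T x + (s0 n k T : ℤ)).toNat

section derived

variable {n k r : ℕ} {T : Finset (Fin k → ℤ)}

lemma zero_mem_Dset (hβ : betaT T ∈ Zgrid n k) : (0:ℕ) ∈ Dset n k T := by
  rw [mem_Dset]
  refine ⟨Nat.succ_pos n, fun j hj => ?_⟩
  interval_cases j
  simpa using hβ

lemma s0_mem_Dset (hβ : betaT T ∈ Zgrid n k) : s0 n k T ∈ Dset n k T := by
  have hne : (Dset n k T).Nonempty := ⟨0, zero_mem_Dset hβ⟩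
  rw [s0, dif_pos hne]
  exact (Dset n k T).max'_mem hne

lemma bT_mem (hβ : betaT T ∈ Zgrid n k) : bT n k T ∈ Zgrid n k := by
  have h := (mem_Dset.mp (s0_mem_Dset (n := n) hβ)).2 (s0 n k T) le_rfl
  simpa [bT] using h

lemma bT_base (hβ : betaT T ∈ Zgrid n k) (hv : vT T ≠ 0) :
    bT n k T - vT T ∉ Zgrid n k := by
  intro hmem
  obtain ⟨i, hi0⟩ := Function.ne_iff.mp hv
  have hi : vT T i ≠ 0 := by simpa using hi0
  have hall : ∀ j : ℕ, j ≤ s0 n k T + 1 → betaT T - (j:ℤ) • vT T ∈ Zgrid n k := by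
    intro j hj
    rcases Nat.lt_or_ge j (s0 n k T + 1) with h | h
    · exact (mem_Dset.mp (s0_mem_Dset (n := n) hβ)).2 j (Nat.lt_succ_iff.mp h)
    · have hj' : j = s0 n k T + 1 := le_antisymm hj h
      subst hj'
      have : betaT T - ((s0 n k T : ℤ) + 1) • vT T = bT n k T - vT T := by
        funext i'
        simp [bT, add_smul, sub_smul]
        ring
      rw [show ((s0 n k T + 1 : ℕ) : ℤ) = (s0 n k T : ℤ) + 1 by push_cast; ring, this]
      exact hmem
  -- cardinality: s0 + 2 ≤ n
  have hcard : s0 n k T + 2 ≤ n := by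
    have hinj : Set.InjOn (fun j : ℕ => betaT T i - (j:ℤ) * vT T i)
        ↑(Finset.range (s0 n k T + 2)) := by
      intro a _ b _ hab
      simp only at hab
      have : (a:ℤ) * vT T i = (b:ℤ) * vT T i := by linarith
      have := mul_right_cancel₀ hi this
      exact_mod_cast this
    have hmap : ∀ j ∈ Finset.range (s0 n k T + 2),
        betaT T i - (j:ℤ) * vT T i ∈ Finset.Icc (1:ℤ) (n:ℤ) := by
      intro j hj
      have hj' : j ≤ s0 n k T + 1 := Nat.lt_succ_iff.mp (Finset.mem_range.mp hj)
      have h2 := mem_Zgrid.mp (hall j hj') i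
      simp only [Pi.sub_apply, Pi.smul_apply, smul_eq_mul] at h2
      exact Finset.mem_Icc.mpr ⟨h2.1, h2.2⟩
    have := Finset.card_le_card_of_injOn
      (fun j : ℕ => betaT T i - (j:ℤ) * vT T i) hmap hinj
    simpa [Int.card_Icc] using this
  -- s0 + 1 ∈ Dset contradicts maximality
  have hmem' : s0 n k T + 1 ∈ Dset n k T := by
    rw [mem_Dset]
    exact ⟨by omega, hall⟩
  have hne : (Dset n k T).Nonempty := ⟨0, zero_mem_Dset hβ⟩
  have h1 := (Dset n k T).le_max' _ hmem'
  have hs0 : s0 n k T = (Dset n k T).max' hne := by rw [s0, dif_pos hne]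
  omega

lemma rep_bT (hβ : betaT T ∈ Zgrid n k) (hx : ∀ x ∈ T, x = betaT T + sT T x • vT T)
    (hnn : ∀ x ∈ T, 0 ≤ sT T x) :
    ∀ x ∈ T, x = bT n k T + (uT n k T x : ℤ) • vT T := by
  intro x hxT
  have h1 : ((uT n k T x : ℕ) : ℤ) = sT T x + (s0 n k T : ℤ) := by
    rw [uT]
    exact Int.toNat_of_nonneg (by linarith [hnn x hxT])
  rw [h1]
  have := hx x hxT
  funext i
  have := congrFun this i
  simp only [Pi.add_apply, Pi.smul_apply, smul_eq_mul, bT, Pi.sub_apply] at this ⊢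
  rw [this]
  ring

lemma uT_injOn (hβ : betaT T ∈ Zgrid n k) (hx : ∀ x ∈ T, x = betaT T + sT T x • vT T)
    (hnn : ∀ x ∈ T, 0 ≤ sT T x) : Set.InjOn (uT n k T) ↑T := by
  intro x hxT y hyT hxy
  have h1 := rep_bT (n := n) hβ hx hnn x hxT
  have h2 := rep_bT (n := n) hβ hx hnn y hyT
  rw [h1, h2, hxy]

end derived
def aOf {k : ℕ} (v : Fin k → ℤ) : ℕ := Finset.univ.sup (fun i => (v i).natAbs)

def WOf {k : ℕ} (n : ℕ) (v : Fin k → ℤ) : ℕ := (n - 1) / aOf v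

noncomputable def VS (n k : ℕ) (v b : Fin k → ℤ) : Finset ℕ :=
  (Finset.range (WOf n v + 1)).filter (fun u => b + (u:ℤ) • v ∈ Zgrid n k)

lemma aOf_pos {k : ℕ} {v : Fin k → ℤ} (hv : v ≠ 0) : 0 < aOf v := by
  obtain ⟨i, hi⟩ := Function.ne_iff.mp hv
  have hi' : v i ≠ 0 := by simpa using hi
  have h1 : 1 ≤ (v i).natAbs := by omega
  have h2 : (v i).natAbs ≤ aOf v :=
    Finset.le_sup (f := fun i => (v i).natAbs) (Finset.mem_univ i)
  omega

lemma card_Zgrid {n k : ℕ} : (Zgrid n k).card = n ^ k := by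
  rw [Zgrid, Fintype.card_piFinset]
  simp [Int.card_Icc]

section perv

variable {n k r : ℕ}

lemma u_le_W (hk : 0 < k) (hr2 : 2 ≤ r) {T : Finset (Fin k → ℤ)} {x : Fin k → ℤ}
    (hT : T ∈ TSet n k r) (hx : x ∈ T) : uT n k T x ≤ WOf n (vT T) := by
  obtain ⟨hsub, hcard, hcol⟩ := mem_TSet.mp hT
  obtain ⟨hv, hβT, hrep, hnn⟩ := pp_of_mem_TSet hr2 hT
  have hβ : betaT T ∈ Zgrid n k := hsub hβT
  have hb : bT n k T ∈ Zgrid n k := bT_mem hβ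
  have hxg : x ∈ Zgrid n k := hsub hx
  have hxrep := rep_bT (n := n) hβ hrep hnn x hx
  obtain ⟨istar, _, hsup⟩ := Finset.exists_mem_eq_sup Finset.univ
    ⟨⟨0, hk⟩, Finset.mem_univ _⟩ (fun i => (vT T i).natAbs)
  have ha : 0 < aOf (vT T) := aOf_pos hv
  -- coordinate bound
  have hco := congrFun hxrep istar
  simp only [Pi.add_apply, Pi.smul_apply, smul_eq_mul] at hco
  have h1 := mem_Zgrid.mp hb istar
  have h2 := mem_Zgrid.mp hxg istar
  have habs : (uT n k T x : ℤ) * |vT T istar| ≤ (n : ℤ) - 1 := by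
    rcases abs_cases (vT T istar) with ⟨he, _⟩ | ⟨he, _⟩ <;> rw [he] <;> nlinarith
  have hnat : uT n k T x * aOf (vT T) ≤ n - 1 := by
    have hco' : (uT n k T x : ℤ) * ((aOf (vT T) : ℕ) : ℤ) ≤ (n:ℤ) - 1 := by
      rw [aOf, hsup]
      rw [Int.abs_eq_natAbs] at habs
      exact_mod_cast habs
    have h1n : 1 ≤ n := by
      have := mem_Zgrid.mp hb istar
      rcases Nat.eq_zero_or_pos n with h | h
      · exfalso; rw [h] at this; push_cast at this; omega
      · exact h
    omega
  rw [WOf]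
  exact Nat.le_div_iff_mul_le ha |>.mpr hnat

lemma mem_VS_of (hk : 0 < k) (hr2 : 2 ≤ r) {T : Finset (Fin k → ℤ)} {x : Fin k → ℤ}
    (hT : T ∈ TSet n k r) (hx : x ∈ T) :
    uT n k T x ∈ VS n k (vT T) (bT n k T) := by
  obtain ⟨hsub, hcard, hcol⟩ := mem_TSet.mp hT
  obtain ⟨hv, hβT, hrep, hnn⟩ := pp_of_mem_TSet hr2 hT
  have hβ : betaT T ∈ Zgrid n k := hsub hβT
  rw [VS, Finset.mem_filter, Finset.mem_range]
  constructor
  · exact Nat.lt_succ_of_le (u_le_W hk hr2 hT hx)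
  · rw [← rep_bT (n := n) hβ hrep hnn x hx]
    exact hsub hx

/-- Recovering `T` from its index set. -/
lemma recover (hr2 : 2 ≤ r) {T : Finset (Fin k → ℤ)} (hT : T ∈ TSet n k r) :
    T = (T.image (uT n k T)).image (fun u : ℕ => bT n k T + (u:ℤ) • vT T) := by
  obtain ⟨hsub, hcard, hcol⟩ := mem_TSet.mp hT
  obtain ⟨hv, hβT, hrep, hnn⟩ := pp_of_mem_TSet hr2 hT
  have hβ : betaT T ∈ Zgrid n k := hsub hβT
  ext z
  simp only [Finset.mem_image, exists_exists_and_eq_and]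
  constructor
  · intro hz
    exact ⟨z, hz, (rep_bT (n := n) hβ hrep hnn z hz).symm⟩
  · rintro ⟨x, hx, rfl⟩
    rw [← rep_bT (n := n) hβ hrep hnn x hx]
    exact hx

/-- The fiber over a fixed `(v, b)` injects into `r`-subsets of `VS`. -/
lemma fiber_card_le (hk : 0 < k) (hr2 : 2 ≤ r) (v b : Fin k → ℤ) :
    ((TSet n k r).filter (fun T => vT T = v ∧ bT n k T = b)).card
      ≤ ((VS n k v b).card).choose r := by
  classical
  rw [← Finset.card_powersetCard]
  refine Finset.card_le_card_of_injOn (fun T => T.image (uT n k T)) ?_ ?_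
  · intro T hT
    rw [Finset.mem_coe, Finset.mem_filter] at hT
    have hvb := hT.2.1
    have hbb := hT.2.2
    have hT := hT.1
    rw [Finset.mem_coe, Finset.mem_powersetCard]
    constructor
    · intro u hu
      rw [Finset.mem_image] at hu
      obtain ⟨x, hx, rfl⟩ := hu
      have := mem_VS_of hk hr2 hT hx
      rwa [hvb, hbb] at this
    · obtain ⟨hsub, hcard, hcol⟩ := mem_TSet.mp hT
      obtain ⟨hv, hβT, hrep, hnn⟩ := pp_of_mem_TSet hr2 hT
      rw [Finset.card_image_of_injOn (uT_injOn (hsub hβT) hrep hnn), hcard]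
  · intro T₁ h₁ T₂ h₂ heq
    simp only [Finset.coe_filter, Set.mem_setOf_eq] at h₁ h₂
    have hT₁ := h₁.1
    have hv₁ := h₁.2.1
    have hb₁ := h₁.2.2
    have hT₂ := h₂.1
    have hv₂ := h₂.2.1
    have hb₂ := h₂.2.2
    have e1 := recover hr2 hT₁
    have e2 := recover hr2 hT₂
    rw [hv₁, hb₁] at e1
    rw [hv₂, hb₂] at e2
    simp only at heq
    rw [e1, e2, heq]

lemma block_helper {v : Fin k → ℤ} {b b' : Fin k → ℤ}
    (hb : b ∈ Zgrid n k) (hb'base : b' - v ∉ Zgrid n k)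
    {u u' : ℕ} (hu : b + (u:ℤ) • v ∈ Zgrid n k) (hle : u' ≤ u)
    (heq : b + (u:ℤ) • v = b' + (u':ℤ) • v) : b = b' := by
  have hd : b' = b + ((u - u' : ℕ) : ℤ) • v := by
    funext i
    have := congrFun heq i
    simp only [Pi.add_apply, Pi.smul_apply, smul_eq_mul] at this ⊢
    have hc : ((u - u' : ℕ) : ℤ) = (u:ℤ) - (u':ℤ) := by
      push_cast [Nat.cast_sub hle]; ring
    rw [hc]; linarith
  rcases Nat.eq_zero_or_pos (u - u') with h0 | hpos
  · rw [hd, h0]; simp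
  · exfalso
    apply hb'base
    set d' : ℕ := u - u' - 1 with hd'
    have hdd : (u - u' : ℕ) = d' + 1 := by omega
    have : b' - v = b + (d' : ℤ) • v := by
      funext i
      have := congrFun hd i
      simp only [Pi.add_apply, Pi.sub_apply, Pi.smul_apply, smul_eq_mul] at this ⊢
      rw [this, hdd]
      push_cast
      ring
    rw [this, mem_Zgrid]
    intro i
    have h1 := mem_Zgrid.mp hb i
    have h2 := mem_Zgrid.mp hu i
    simp only [Pi.add_apply, Pi.smul_apply, smul_eq_mul] at h2 ⊢
    have hd'u : (d' : ℤ) ≤ (u : ℤ) := by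
      have : d' ≤ u := by omega
      exact_mod_cast this
    have hd'0 : (0:ℤ) ≤ (d' : ℤ) := Int.natCast_nonneg _
    rcases le_or_gt 0 (v i) with hvi | hvi
    · constructor <;> nlinarith
    · constructor <;> nlinarith

lemma sum_VS_le (hn : 0 < k) {v : Fin k → ℤ} (hv : v ≠ 0) :
    ∑ b ∈ (Zgrid n k).filter (fun b => b - v ∉ Zgrid n k), (VS n k v b).card ≤ n ^ k := by
  classical
  set Bv := (Zgrid n k).filter (fun b => b - v ∉ Zgrid n k) with hBv
  obtain ⟨i, hi0⟩ := Function.ne_iff.mp hv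
  have hi : v i ≠ 0 := by simpa using hi0
  have hinj : ∀ b : Fin k → ℤ, Set.InjOn (fun u : ℕ => b + (u:ℤ) • v) ↑(VS n k v b) := by
    intro b u _ u' _ huu
    have := congrFun huu i
    simp only [Pi.add_apply, Pi.smul_apply, smul_eq_mul] at this
    have : (u:ℤ) * v i = (u':ℤ) * v i := by linarith
    have := mul_right_cancel₀ hi this
    exact_mod_cast this
  have hdisj : ∀ b ∈ Bv, ∀ b' ∈ Bv, b ≠ b' →
      Disjoint ((VS n k v b).image (fun u : ℕ => b + (u:ℤ) • v))
        ((VS n k v b').image (fun u : ℕ => b' + (u:ℤ) • v)) := by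
    intro b hb b' hb' hne
    rw [Finset.disjoint_left]
    intro z hz hz'
    apply hne
    rw [Finset.mem_image] at hz hz'
    obtain ⟨u, hu, rfl⟩ := hz
    obtain ⟨u', hu', heq⟩ := hz'
    rw [hBv, Finset.mem_filter] at hb hb'
    have hug : b + (u:ℤ) • v ∈ Zgrid n k := (Finset.mem_filter.mp hu).2
    have hug' : b' + (u':ℤ) • v ∈ Zgrid n k := (Finset.mem_filter.mp hu').2
    rcases le_total u' u with h | h
    · exact block_helper hb.1 hb'.2 hug h heq.symm
    · exact (block_helper hb'.1 hb.2 hug' h heq).symm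
  calc ∑ b ∈ Bv, (VS n k v b).card
      = ∑ b ∈ Bv, ((VS n k v b).image (fun u : ℕ => b + (u:ℤ) • v)).card := by
        refine Finset.sum_congr rfl fun b _ => ?_
        rw [Finset.card_image_of_injOn (hinj b)]
    _ = (Bv.biUnion (fun b => (VS n k v b).image (fun u : ℕ => b + (u:ℤ) • v))).card :=
        (Finset.card_biUnion hdisj).symm
    _ ≤ (Zgrid n k).card := by
        apply Finset.card_le_card
        intro z hz
        rw [Finset.mem_biUnion] at hz
        obtain ⟨b, _, hz⟩ := hz
        rw [Finset.mem_image] at hz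
        obtain ⟨u, hu, rfl⟩ := hz
        exact (Finset.mem_filter.mp hu).2
    _ = n ^ k := card_Zgrid

lemma fact_choose_le {m W rr : ℕ} (hm : m ≤ W + 1) (hr : 1 ≤ rr) :
    rr.factorial * m.choose rr ≤ m * W ^ (rr - 1) := by
  rw [← Nat.descFactorial_eq_factorial_mul_choose]
  match m, rr with
  | 0, rr => cases rr with
    | zero => omega
    | succ r' => simp
  | m' + 1, rr => cases rr with
    | zero => omega
    | succ r' =>
      rw [Nat.succ_descFactorial_succ]
      simp only [Nat.add_sub_cancel]
      have h1 : m'.descFactorial r' ≤ m' ^ r' := Nat.descFactorial_le_pow _ _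
      have h2 : m' ^ r' ≤ W ^ r' := Nat.pow_le_pow_left (by omega) _
      exact Nat.mul_le_mul_left _ (le_trans h1 h2)

/-- The main per-direction bound. -/
lemma per_v (hk : 0 < k) (hr2 : 2 ≤ r) (v : Fin k → ℤ) :
    r.factorial * ((TSet n k r).filter (fun T => vT T = v)).card
      ≤ n ^ k * (WOf n v) ^ (r - 1) := by
  classical
  set Fv := (TSet n k r).filter (fun T => vT T = v) with hFv
  rcases Finset.eq_empty_or_nonempty Fv with h | ⟨T₀, hT₀⟩
  · rw [h]; simp
  · have hT₀' := Finset.mem_filter.mp hT₀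
    have hv : v ≠ 0 := by
      rw [← hT₀'.2]
      exact (pp_of_mem_TSet hr2 hT₀'.1).1
    set Bv := (Zgrid n k).filter (fun b => b - v ∉ Zgrid n k) with hBv
    have hmapsto : ∀ T ∈ Fv, bT n k T ∈ Bv := by
      intro T hT
      rw [hFv, Finset.mem_filter] at hT
      obtain ⟨hT, hvT⟩ := hT
      obtain ⟨hsub, hcard, hcol⟩ := mem_TSet.mp hT
      obtain ⟨hv', hβT, hrep, hnn⟩ := pp_of_mem_TSet hr2 hT
      have hβ : betaT T ∈ Zgrid n k := hsub hβT
      rw [hBv, Finset.mem_filter]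
      refine ⟨bT_mem hβ, ?_⟩
      rw [← hvT]
      exact bT_base hβ hv'
    have hsplit : Fv.card = ∑ b ∈ Bv, (Fv.filter (fun T => bT n k T = b)).card :=
      Finset.card_eq_sum_card_fiberwise hmapsto
    have hfib : ∀ b ∈ Bv, (Fv.filter (fun T => bT n k T = b)).card
        ≤ ((VS n k v b).card).choose r := by
      intro b _
      have : Fv.filter (fun T => bT n k T = b)
          = (TSet n k r).filter (fun T => vT T = v ∧ bT n k T = b) := by
        rw [hFv, Finset.filter_filter]
      rw [this]
      exact fiber_card_le hk hr2 v b
    calc r.factorial * Fv.card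
        = ∑ b ∈ Bv, r.factorial * (Fv.filter (fun T => bT n k T = b)).card := by
          rw [hsplit, Finset.mul_sum]
      _ ≤ ∑ b ∈ Bv, r.factorial * ((VS n k v b).card).choose r := by
          refine Finset.sum_le_sum fun b hb => Nat.mul_le_mul_left _ (hfib b hb)
      _ ≤ ∑ b ∈ Bv, (VS n k v b).card * (WOf n v) ^ (r - 1) := by
          refine Finset.sum_le_sum fun b _ => ?_
          refine fact_choose_le ?_ (by omega)
          calc (VS n k v b).card ≤ (Finset.range (WOf n v + 1)).card :=
                Finset.card_le_card (Finset.filter_subset _ _)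
            _ = WOf n v + 1 := Finset.card_range _
      _ = (∑ b ∈ Bv, (VS n k v b).card) * (WOf n v) ^ (r - 1) := by
          rw [Finset.sum_mul]
      _ ≤ n ^ k * (WOf n v) ^ (r - 1) := by
          exact Nat.mul_le_mul_right _ (sum_VS_le hk hv)

end perv
noncomputable def Vfin (n k : ℕ) : Finset (Fin k → ℤ) := Fintype.piFinset fun _ => Finset.Icc (-(n:ℤ)) (n:ℤ)

section master

variable {n k r : ℕ}

lemma vT_mem_Vfin (hr2 : 2 ≤ r) {T : Finset (Fin k → ℤ)} (hT : T ∈ TSet n k r) :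
    vT T ∈ Vfin n k := by
  obtain ⟨hsub, hcard, hcol⟩ := mem_TSet.mp hT
  have hPP := pp_of_mem_TSet hr2 hT
  have hv : vT T ≠ 0 := hPP.1
  have hβT : betaT T ∈ T := hPP.2.1
  have hrep : ∀ x ∈ T, x = betaT T + sT T x • vT T := hPP.2.2.1
  have hnn : ∀ x ∈ T, 0 ≤ sT T x := hPP.2.2.2
  obtain ⟨x₀, hx₀, y₀, hy₀, hxy⟩ := Finset.one_lt_card.mp (by omega : 1 < T.card)
  rw [Vfin, Fintype.mem_piFinset]
  intro i
  rw [Finset.mem_Icc]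
  have e1 := congrFun (hrep x₀ hx₀) i
  have e2 := congrFun (hrep y₀ hy₀) i
  simp only [Pi.add_apply, Pi.smul_apply, smul_eq_mul] at e1 e2
  have hs : sT T x₀ ≠ sT T y₀ := by
    intro h
    apply hxy
    rw [hrep x₀ hx₀, hrep y₀ hy₀, h]
  have h1 := (mem_Zgrid.mp (hsub hx₀)) i
  have h2 := (mem_Zgrid.mp (hsub hy₀)) i
  have habs : |vT T i| ≤ (n:ℤ) - 1 := by
    have hd : x₀ i - y₀ i = (sT T x₀ - sT T y₀) * vT T i := by linarith
    have h3 : |x₀ i - y₀ i| ≤ (n:ℤ) - 1 := by rw [abs_le]; omega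
    have h4 : 1 ≤ |sT T x₀ - sT T y₀| := Int.one_le_abs (sub_ne_zero.mpr hs)
    calc |vT T i| = 1 * |vT T i| := (one_mul _).symm
      _ ≤ |sT T x₀ - sT T y₀| * |vT T i| :=
          mul_le_mul_of_nonneg_right h4 (abs_nonneg _)
      _ = |x₀ i - y₀ i| := by rw [← abs_mul, hd]
      _ ≤ (n:ℤ) - 1 := h3
  rw [abs_le] at habs
  omega

lemma master_nat (hk : 0 < k) (hr2 : 2 ≤ r) :
    r.factorial * (TSet n k r).card ≤ n ^ k * ∑ v ∈ Vfin n k, (WOf n v) ^ (r - 1) := by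
  classical
  have hsplit : (TSet n k r).card
      = ∑ v ∈ Vfin n k, ((TSet n k r).filter (fun T => vT T = v)).card :=
    Finset.card_eq_sum_card_fiberwise (fun T hT => vT_mem_Vfin hr2 hT)
  calc r.factorial * (TSet n k r).card
      = ∑ v ∈ Vfin n k, r.factorial * ((TSet n k r).filter (fun T => vT T = v)).card := by
        rw [hsplit, Finset.mul_sum]
    _ ≤ ∑ v ∈ Vfin n k, n ^ k * (WOf n v) ^ (r - 1) :=
        Finset.sum_le_sum fun v _ => per_v hk hr2 v
    _ = n ^ k * ∑ v ∈ Vfin n k, (WOf n v) ^ (r - 1) := by rw [Finset.mul_sum]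

lemma card_aOf_fiber_le (hk : 0 < k) {a : ℕ} (ha : 1 ≤ a) :
    ((Vfin n k).filter (fun v => aOf v = a)).card
      ≤ k * (2 * (2 * a + 1) ^ (k - 1)) := by
  set Fi : Fin k → Finset (Fin k → ℤ) := fun i => Fintype.piFinset
    (fun j => if j = i then ({-(a:ℤ), (a:ℤ)} : Finset ℤ) else Finset.Icc (-(a:ℤ)) (a:ℤ))
    with hFi
  have hsub : ((Vfin n k).filter (fun v => aOf v = a))
      ⊆ Finset.univ.biUnion Fi := by
    intro v hv
    rw [Finset.mem_filter] at hv
    obtain ⟨hvV, hva⟩ := hv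
    obtain ⟨i, _, hsup⟩ := Finset.exists_mem_eq_sup Finset.univ
      ⟨⟨0, hk⟩, Finset.mem_univ _⟩ (fun i => (v i).natAbs)
    rw [Finset.mem_biUnion]
    refine ⟨i, Finset.mem_univ _, ?_⟩
    rw [hFi, Fintype.mem_piFinset]
    intro j
    by_cases hj : j = i
    · have hnat : (v j).natAbs = a := by rw [← hva, aOf, hj, hsup]
      simp only [if_pos hj, Finset.mem_insert, Finset.mem_singleton]
      omega
    · simp only [if_neg hj, Finset.mem_Icc]
      have hle : (v j).natAbs ≤ a := by
        rw [← hva]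
        exact Finset.le_sup (f := fun i => (v i).natAbs) (Finset.mem_univ j)
      omega
  have hcardFi : ∀ i, (Fi i).card = 2 * (2 * a + 1) ^ (k - 1) := by
    intro i
    rw [hFi, Fintype.card_piFinset]
    rw [Fintype.prod_eq_mul_prod_compl i]
    have h1 : (if i = i then ({-(a:ℤ), (a:ℤ)} : Finset ℤ) else Finset.Icc (-(a:ℤ)) (a:ℤ)).card = 2 := by
      rw [if_pos rfl]
      rw [Finset.card_insert_of_notMem (by simp; omega), Finset.card_singleton]
    rw [h1]
    have h2 : ∀ j ∈ ({i}ᶜ : Finset (Fin k)),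
        (if j = i then ({-(a:ℤ), (a:ℤ)} : Finset ℤ) else Finset.Icc (-(a:ℤ)) (a:ℤ)).card
          = 2 * a + 1 := by
      intro j hj
      rw [Finset.mem_compl, Finset.mem_singleton] at hj
      rw [if_neg hj, Int.card_Icc]
      omega
    rw [Finset.prod_congr rfl h2, Finset.prod_const]
    congr 1
    rw [Finset.card_compl, Finset.card_singleton, Fintype.card_fin]
  calc ((Vfin n k).filter (fun v => aOf v = a)).card
      ≤ (Finset.univ.biUnion Fi).card := Finset.card_le_card hsub
    _ ≤ ∑ i, (Fi i).card := Finset.card_biUnion_le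
    _ = k * (2 * (2 * a + 1) ^ (k - 1)) := by
        rw [Finset.sum_congr rfl (fun i _ => hcardFi i), Finset.sum_const, Finset.card_univ,
          Fintype.card_fin, smul_eq_mul]

end master
lemma telescope_sum (n : ℕ) :
    ∑ j ∈ Finset.range n, (1:ℝ) / (((j:ℝ) + 1) * ((j:ℝ) + 2)) ≤ 1 := by
  have key : ∀ m : ℕ, ∑ j ∈ Finset.range m, (1:ℝ) / (((j:ℝ) + 1) * ((j:ℝ) + 2))
      = 1 - 1 / ((m:ℝ) + 1) := by
    intro m
    induction m with
    | zero => simp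
    | succ p ih =>
        rw [Finset.sum_range_succ, ih]
        have h1 : ((p:ℝ) + 1) ≠ 0 := by positivity
        have h2 : ((p:ℝ) + 2) ≠ 0 := by positivity
        push_cast
        field_simp
        ring
  rw [key n]
  have : (0:ℝ) ≤ 1 / ((n:ℝ) + 1) := by positivity
  linarith

section realside

variable {n k r : ℕ}

lemma WOf_real_le (hn : 1 ≤ n) {v : Fin k → ℤ} {a : ℕ} (ha : 1 ≤ a) (hva : aOf v = a) :
    ((WOf n v : ℕ) : ℝ) ≤ 2 * (n:ℝ) / ((a:ℝ) + 1) := by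
  have h1 : ((WOf n v : ℕ) : ℝ) ≤ ((n - 1 : ℕ) : ℝ) / (a : ℝ) := by
    rw [WOf, hva]
    exact Nat.cast_div_le
  have ha' : (1:ℝ) ≤ (a:ℝ) := by exact_mod_cast ha
  have hn' : (1:ℝ) ≤ (n:ℝ) := by exact_mod_cast hn
  have h2 : ((n - 1 : ℕ) : ℝ) = (n:ℝ) - 1 := by
    push_cast [Nat.cast_sub hn]
    ring
  rw [h2] at h1
  have h3 : ((n:ℝ) - 1) / (a:ℝ) ≤ 2 * (n:ℝ) / ((a:ℝ) + 1) := by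
    rw [div_le_div_iff₀ (by linarith) (by linarith)]
    nlinarith [mul_le_mul_of_nonneg_left ha' (by linarith : (0:ℝ) ≤ (n:ℝ))]
  linarith

lemma inner_bound (hk : 0 < k) (hn : 1 ≤ n) (hrk : k + 2 ≤ r) {a : ℕ} (ha : 1 ≤ a) :
    ∑ v ∈ (Vfin n k).filter (fun v => aOf v = a), ((WOf n v : ℕ) : ℝ) ^ (r - 1)
      ≤ ((k : ℝ) * 2 ^ k * (2 * (n:ℝ)) ^ (r - 1)) * (1 / ((a:ℝ) * ((a:ℝ) + 1))) := by
  have ha' : (1:ℝ) ≤ (a:ℝ) := by exact_mod_cast ha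
  have hterm : ∀ v ∈ (Vfin n k).filter (fun v => aOf v = a),
      ((WOf n v : ℕ) : ℝ) ^ (r - 1) ≤ (2 * (n:ℝ) / ((a:ℝ) + 1)) ^ (r - 1) := by
    intro v hv
    rw [Finset.mem_filter] at hv
    exact pow_le_pow_left₀ (by positivity) (WOf_real_le hn ha hv.2) _
  have hcard : (((Vfin n k).filter (fun v => aOf v = a)).card : ℝ)
      ≤ (k : ℝ) * 2 ^ k * ((a:ℝ) + 1) ^ (k - 1) := by
    have h1 := card_aOf_fiber_le (n := n) hk ha
    have h3 : ((2 * (a:ℝ) + 1)) ^ (k - 1) ≤ (2 * ((a:ℝ) + 1)) ^ (k - 1) := by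
      apply pow_le_pow_left₀ (by positivity)
      linarith
    rw [mul_pow] at h3
    have h4 : (2:ℝ) * 2 ^ (k - 1) = 2 ^ k := by
      rw [← pow_succ']
      congr 1
      omega
    calc (((Vfin n k).filter (fun v => aOf v = a)).card : ℝ)
        ≤ ((k * (2 * (2 * a + 1) ^ (k - 1)) : ℕ) : ℝ) := by exact_mod_cast h1
      _ = (k : ℝ) * (2 * ((2 * (a:ℝ) + 1)) ^ (k - 1)) := by push_cast; ring
      _ ≤ (k : ℝ) * (2 * (2 ^ (k - 1) * ((a:ℝ) + 1) ^ (k - 1))) := by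
          have hk0 : (0:ℝ) ≤ (k:ℝ) := by positivity
          nlinarith
      _ = (k : ℝ) * 2 ^ k * ((a:ℝ) + 1) ^ (k - 1) := by rw [← h4]; ring
  have hkey : ((a:ℝ) + 1) ^ (k - 1) * ((a:ℝ) * ((a:ℝ) + 1)) ≤ ((a:ℝ) + 1) ^ (r - 1) := by
    have e1 : (a:ℝ) * ((a:ℝ) + 1) ≤ ((a:ℝ) + 1) ^ 2 := by nlinarith
    have e2 : ((a:ℝ) + 1) ^ (k - 1) * ((a:ℝ) + 1) ^ 2 = ((a:ℝ) + 1) ^ (k + 1) := by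
      rw [← pow_add]
      congr 1
      omega
    have e3 : ((a:ℝ) + 1) ^ (k + 1) ≤ ((a:ℝ) + 1) ^ (r - 1) := by
      apply pow_le_pow_right₀ (by linarith)
      omega
    calc ((a:ℝ) + 1) ^ (k - 1) * ((a:ℝ) * ((a:ℝ) + 1))
        ≤ ((a:ℝ) + 1) ^ (k - 1) * ((a:ℝ) + 1) ^ 2 :=
          mul_le_mul_of_nonneg_left e1 (by positivity)
      _ = ((a:ℝ) + 1) ^ (k + 1) := e2
      _ ≤ _ := e3
  have h5 : ((a:ℝ) + 1) ^ (k - 1) / ((a:ℝ) + 1) ^ (r - 1)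
      ≤ 1 / ((a:ℝ) * ((a:ℝ) + 1)) := by
    rw [div_le_div_iff₀ (by positivity) (by positivity)]
    calc ((a:ℝ) + 1) ^ (k - 1) * ((a:ℝ) * ((a:ℝ) + 1)) ≤ ((a:ℝ) + 1) ^ (r - 1) := hkey
      _ = 1 * ((a:ℝ) + 1) ^ (r - 1) := (one_mul _).symm
  calc ∑ v ∈ (Vfin n k).filter (fun v => aOf v = a), ((WOf n v : ℕ) : ℝ) ^ (r - 1)
      ≤ ∑ _v ∈ (Vfin n k).filter (fun v => aOf v = a), (2 * (n:ℝ) / ((a:ℝ) + 1)) ^ (r - 1) :=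
        Finset.sum_le_sum hterm
    _ = (((Vfin n k).filter (fun v => aOf v = a)).card : ℝ)
          * (2 * (n:ℝ) / ((a:ℝ) + 1)) ^ (r - 1) := by
        rw [Finset.sum_const, nsmul_eq_mul]
    _ ≤ (k : ℝ) * 2 ^ k * ((a:ℝ) + 1) ^ (k - 1) * (2 * (n:ℝ) / ((a:ℝ) + 1)) ^ (r - 1) :=
        mul_le_mul_of_nonneg_right hcard (by positivity)
    _ = ((k : ℝ) * 2 ^ k * (2 * (n:ℝ)) ^ (r - 1))
          * (((a:ℝ) + 1) ^ (k - 1) / ((a:ℝ) + 1) ^ (r - 1)) := by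
        rw [div_pow]
        ring
    _ ≤ ((k : ℝ) * 2 ^ k * (2 * (n:ℝ)) ^ (r - 1)) * (1 / ((a:ℝ) * ((a:ℝ) + 1))) :=
        mul_le_mul_of_nonneg_left h5 (by positivity)

lemma sum_W_real (hk : 0 < k) (hn : 1 ≤ n) (hr2 : 2 ≤ r) (hrk : k + 2 ≤ r) :
    ∑ v ∈ Vfin n k, ((WOf n v : ℕ) : ℝ) ^ (r - 1)
      ≤ (k : ℝ) * 2 ^ (k + r - 1) * (n : ℝ) ^ (r - 1) := by
  have hmaps : ∀ v ∈ Vfin n k, aOf v ∈ Finset.range (n + 1) := by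
    intro v hv
    rw [Finset.mem_range, Nat.lt_succ_iff, aOf]
    apply Finset.sup_le
    intro i _
    rw [Vfin, Fintype.mem_piFinset] at hv
    have := hv i
    rw [Finset.mem_Icc] at this
    omega
  rw [← Finset.sum_fiberwise_of_maps_to hmaps (fun v => ((WOf n v : ℕ) : ℝ) ^ (r - 1))]
  rw [Finset.sum_range_succ']
  set C : ℝ := (k : ℝ) * 2 ^ k * (2 * (n:ℝ)) ^ (r - 1) with hC
  have hCnn : 0 ≤ C := by positivity
  have hzero : ∑ v ∈ (Vfin n k).filter (fun v => aOf v = 0),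
      ((WOf n v : ℕ) : ℝ) ^ (r - 1) = 0 := by
    apply Finset.sum_eq_zero
    intro v hv
    rw [Finset.mem_filter] at hv
    have : WOf n v = 0 := by rw [WOf, hv.2, Nat.div_zero]
    rw [this]
    simp only [Nat.cast_zero]
    exact zero_pow (by omega)
  have hinner : ∀ j ∈ Finset.range n,
      ∑ v ∈ (Vfin n k).filter (fun v => aOf v = j + 1),
        ((WOf n v : ℕ) : ℝ) ^ (r - 1) ≤ C * (1 / (((j:ℝ) + 1) * ((j:ℝ) + 2))) := by
    intro j _
    have h := inner_bound (n := n) hk hn hrk (a := j + 1) (by omega)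
    have hc : (((j+1:ℕ):ℝ)) * (((j+1:ℕ):ℝ) + 1) = ((j:ℝ) + 1) * ((j:ℝ) + 2) := by
      push_cast
      ring
    rw [hc] at h
    exact h
  calc (∑ j ∈ Finset.range n, ∑ v ∈ (Vfin n k).filter (fun v => aOf v = j + 1),
          ((WOf n v : ℕ) : ℝ) ^ (r - 1))
        + ∑ v ∈ (Vfin n k).filter (fun v => aOf v = 0), ((WOf n v : ℕ) : ℝ) ^ (r - 1)
      ≤ (∑ j ∈ Finset.range n, C * (1 / (((j:ℝ) + 1) * ((j:ℝ) + 2)))) + 0 := by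
        rw [hzero]
        exact add_le_add_left (Finset.sum_le_sum hinner) 0
    _ = C * ∑ j ∈ Finset.range n, (1:ℝ) / (((j:ℝ) + 1) * ((j:ℝ) + 2)) := by
        rw [add_zero, Finset.mul_sum]
    _ ≤ C * 1 := mul_le_mul_of_nonneg_left (telescope_sum n) hCnn
    _ ≤ (k : ℝ) * 2 ^ (k + r - 1) * (n : ℝ) ^ (r - 1) := by
        apply le_of_eq
        rw [hC, mul_one, mul_pow]
        have h24 : (2:ℝ) ^ k * (2:ℝ) ^ (r - 1) = 2 ^ (k + r - 1) := by
          rw [← pow_add]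
          congr 1
          omega
        calc (k : ℝ) * 2 ^ k * ((2:ℝ) ^ (r - 1) * (n:ℝ) ^ (r - 1))
            = (k:ℝ) * ((2:ℝ) ^ k * 2 ^ (r - 1)) * (n:ℝ) ^ (r - 1) := by ring
          _ = (k : ℝ) * 2 ^ (k + r - 1) * (n : ℝ) ^ (r - 1) := by rw [h24]

end realside
section final

lemma ncard_le_TSet (n k r : ℕ) :
    ({T : Finset (Fin k → ℝ) |
        (∀ x ∈ T, ∀ i, ∃ m : ℕ, 1 ≤ m ∧ m ≤ n ∧ x i = m) ∧
        T.card = r ∧ Collinear ℝ (↑T : Set (Fin k → ℝ))}.ncard) ≤ (TSet n k r).card := by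
  classical
  set S : Set (Finset (Fin k → ℝ)) := {T : Finset (Fin k → ℝ) |
        (∀ x ∈ T, ∀ i, ∃ m : ℕ, 1 ≤ m ∧ m ≤ n ∧ x i = m) ∧
        T.card = r ∧ Collinear ℝ (↑T : Set (Fin k → ℝ))} with hS
  set zf : (Fin k → ℝ) → (Fin k → ℤ) := fun x i => ⌊x i⌋ with hzf
  set f : Finset (Fin k → ℝ) → Finset (Fin k → ℤ) := fun T => T.image zf with hf
  have hid : ∀ x : Fin k → ℝ, (∀ i, ∃ m : ℕ, 1 ≤ m ∧ m ≤ n ∧ x i = m) →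
      castPt (zf x) = x := by
    intro x hx
    funext i
    obtain ⟨m, _, _, h3⟩ := hx i
    simp [castPt, hzf, h3, Int.floor_natCast]
  have hmemZ : ∀ x : Fin k → ℝ, (∀ i, ∃ m : ℕ, 1 ≤ m ∧ m ≤ n ∧ x i = m) →
      zf x ∈ Zgrid n k := by
    intro x hx
    rw [mem_Zgrid]
    intro i
    obtain ⟨m, h1, h2, h3⟩ := hx i
    have : zf x i = (m : ℤ) := by simp [hzf, h3, Int.floor_natCast]
    rw [this]
    omega
  have hrecov : ∀ T : Finset (Fin k → ℝ), T ∈ S → (f T).image castPt = T := by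
    intro T hT
    rw [hS, Set.mem_setOf_eq] at hT
    rw [hf]
    simp only
    rw [Finset.image_image]
    calc T.image (castPt ∘ zf) = T.image id := by
          apply Finset.image_congr
          intro x hx
          exact hid x (hT.1 x hx)
      _ = T := Finset.image_id
  have hfmem : ∀ T ∈ S, f T ∈ TSet n k r := by
    intro T hT
    have hT' := hT
    rw [hS, Set.mem_setOf_eq] at hT'
    obtain ⟨hgrid, hcard, hcol⟩ := hT'
    rw [mem_TSet]
    refine ⟨?_, ?_, ?_⟩
    · intro z hz
      rw [hf] at hz
      simp only [Finset.mem_image] at hz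
      obtain ⟨x, hx, rfl⟩ := hz
      exact hmemZ x (hgrid x hx)
    · rw [hf]
      simp only
      rw [Finset.card_image_of_injOn, hcard]
      intro x hx y hy hxy
      calc x = castPt (zf x) := (hid x (hgrid x hx)).symm
        _ = castPt (zf y) := by rw [hxy]
        _ = y := hid y (hgrid y hy)
    · have : castPt '' (↑(f T) : Set (Fin k → ℤ)) = (↑T : Set (Fin k → ℝ)) := by
        have := hrecov T hT
        calc castPt '' (↑(f T) : Set (Fin k → ℤ)) = ↑((f T).image castPt) :=
              (Finset.coe_image).symm
          _ = ↑T := by rw [this]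
      rw [this]
      exact hcol
  have hfinj : Set.InjOn f S := by
    intro T₁ h₁ T₂ h₂ heq
    calc T₁ = (f T₁).image castPt := (hrecov T₁ h₁).symm
      _ = (f T₂).image castPt := by rw [heq]
      _ = T₂ := hrecov T₂ h₂
  calc S.ncard = (f '' S).ncard := (Set.ncard_image_of_injOn hfinj).symm
    _ ≤ (↑(TSet n k r) : Set (Finset (Fin k → ℤ))).ncard := by
        apply Set.ncard_le_ncard
        · rintro z ⟨T, hT, rfl⟩
          exact hfmem T hT
        · exact (TSet n k r).finite_toSet
    _ = (TSet n k r).card := Set.ncard_coe_finset _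

end final

/-- For `n ≥ k ≥ 3` and `r > k+1`, the number of collinear `r`-element subsets of the
grid `[n]^k = {1,…,n}^k` is at most `(k·2^(r+k+1)/r!)·n^(r+k-1)`. -/
theorem collinear_tuples_grid_bound_large_r (n k r : ℕ) (hk : 3 ≤ k) (hkn : k ≤ n)
    (hr : k + 1 < r) :
    (({T : Finset (Fin k → ℝ) |
        (∀ x ∈ T, ∀ i, ∃ m : ℕ, 1 ≤ m ∧ m ≤ n ∧ x i = m) ∧
        T.card = r ∧ Collinear ℝ (↑T : Set (Fin k → ℝ))}.ncard : ℝ))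
      ≤ (k : ℝ) * 2 ^ (r + k + 1) / (r.factorial : ℝ) * (n : ℝ) ^ (r + k - 1) := by
  have hk0 : 0 < k := by omega
  have hn1 : 1 ≤ n := by omega
  have hr2 : 2 ≤ r := by omega
  have hrk : k + 2 ≤ r := by omega
  have h1 := ncard_le_TSet n k r
  have h2 := master_nat (n := n) (k := k) (r := r) hk0 hr2
  have h3 := sum_W_real (n := n) (k := k) (r := r) hk0 hn1 hr2 hrk
  have hfac : (0:ℝ) < (r.factorial : ℝ) := by
    exact_mod_cast r.factorial_pos
  -- cast the nat master bound to ℝ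
  have h2' : (r.factorial : ℝ) * ((TSet n k r).card : ℝ)
      ≤ (n:ℝ) ^ k * ∑ v ∈ Vfin n k, ((WOf n v : ℕ) : ℝ) ^ (r - 1) := by
    calc (r.factorial : ℝ) * ((TSet n k r).card : ℝ)
        = ((r.factorial * (TSet n k r).card : ℕ) : ℝ) := by push_cast; ring
      _ ≤ ((n ^ k * ∑ v ∈ Vfin n k, (WOf n v) ^ (r - 1) : ℕ) : ℝ) := by exact_mod_cast h2
      _ = (n:ℝ) ^ k * ∑ v ∈ Vfin n k, ((WOf n v : ℕ) : ℝ) ^ (r - 1) := by push_cast; ring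
  have h4 : (r.factorial : ℝ) * ((TSet n k r).card : ℝ)
      ≤ (k : ℝ) * 2 ^ (k + r - 1) * (n : ℝ) ^ (k + (r - 1)) := by
    calc (r.factorial : ℝ) * ((TSet n k r).card : ℝ)
        ≤ (n:ℝ) ^ k * ∑ v ∈ Vfin n k, ((WOf n v : ℕ) : ℝ) ^ (r - 1) := h2'
      _ ≤ (n:ℝ) ^ k * ((k : ℝ) * 2 ^ (k + r - 1) * (n : ℝ) ^ (r - 1)) :=
          mul_le_mul_of_nonneg_left h3 (by positivity)
      _ = (k : ℝ) * 2 ^ (k + r - 1) * (n : ℝ) ^ (k + (r - 1)) := by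
          rw [pow_add]
          ring
  have hexp : k + (r - 1) = r + k - 1 := by clear * - hr2; omega
  rw [hexp] at h4
  have h5 : (k : ℝ) * 2 ^ (k + r - 1) ≤ (k : ℝ) * 2 ^ (r + k + 1) := by
    apply mul_le_mul_of_nonneg_left _ (by positivity)
    apply pow_le_pow_right₀ (by norm_num)
    clear * -; omega
  have h6 : (r.factorial : ℝ) * ((TSet n k r).card : ℝ)
      ≤ (k : ℝ) * 2 ^ (r + k + 1) * (n : ℝ) ^ (r + k - 1) := by
    calc (r.factorial : ℝ) * ((TSet n k r).card : ℝ)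
        ≤ (k : ℝ) * 2 ^ (k + r - 1) * (n : ℝ) ^ (r + k - 1) := h4
      _ ≤ (k : ℝ) * 2 ^ (r + k + 1) * (n : ℝ) ^ (r + k - 1) :=
          mul_le_mul_of_nonneg_right h5 (by positivity)
  have hN : (({T : Finset (Fin k → ℝ) |
        (∀ x ∈ T, ∀ i, ∃ m : ℕ, 1 ≤ m ∧ m ≤ n ∧ x i = m) ∧
        T.card = r ∧ Collinear ℝ (↑T : Set (Fin k → ℝ))}.ncard : ℝ))
      ≤ ((TSet n k r).card : ℝ) := by exact_mod_cast h1
  rw [div_mul_eq_mul_div, le_div_iff₀ hfac]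
  calc ({T : Finset (Fin k → ℝ) |
        (∀ x ∈ T, ∀ i, ∃ m : ℕ, 1 ≤ m ∧ m ≤ n ∧ x i = m) ∧
        T.card = r ∧ Collinear ℝ (↑T : Set (Fin k → ℝ))}.ncard : ℝ) * (r.factorial : ℝ)
      ≤ ((TSet n k r).card : ℝ) * (r.factorial : ℝ) :=
        mul_le_mul_of_nonneg_right hN hfac.le
    _ = (r.factorial : ℝ) * ((TSet n k r).card : ℝ) := by ring
    _ ≤ (k : ℝ) * 2 ^ (r + k + 1) * (n : ℝ) ^ (r + k - 1) := h6
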